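/- For all n ≥ 2, the following identities hold in ℤ[t]: A_n^<(1,t) = (d/dt)( t · A_{n−1}(t) ) and Ã_n(1,t) = n t A_{n−1}(t); equivalently, Σ_{σ ∈ S_n, σ(1)<σ(n)} t^{des(σ)} = (d/dt)( t · A_{n−1}(t) ) and Σ_{σ ∈ S_n} t^{cdes(σ)} = n t A_{n−1}(t). -/

import Mathlib

open Finset MvPolynomial Polynomial

attribute [local instance] Classical.propDecidable

noncomputable section

/-- The descent number of a word `w = w₁⋯wₙ` over the alphabet `[k]`:
the number of indices `i ∈ [n-1]` with `wᵢ > wᵢ₊₁`. -/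
def desc {n k : ℕ} (w : Fin n → Fin k) : ℕ :=
  (Finset.univ.filter fun i : Fin n =>
    ∃ h : (i : ℕ) + 1 < n, w ⟨(i : ℕ) + 1, h⟩ < w i).card

/-- The cyclic descent number: the number of indices `i ∈ [n]` with `wᵢ > wᵢ₊₁`,
where `wₙ₊₁ := w₁`. -/
def cdesc {n k : ℕ} (w : Fin n → Fin k) : ℕ :=
  (Finset.univ.filter fun i : Fin n =>
    w ⟨((i : ℕ) + 1) % n, Nat.mod_lt _ i.pos⟩ < w i).card

/-- A word is Smirnov if no two adjacent letters are equal. -/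
def IsSmirnov {n k : ℕ} (w : Fin n → Fin k) : Prop :=
  ∀ i : Fin n, ∀ h : (i : ℕ) + 1 < n, w ⟨(i : ℕ) + 1, h⟩ ≠ w i

/-- the first letter is strictly smaller than the last letter -/
def FirstLtLast {n k : ℕ} (w : Fin n → Fin k) : Prop :=
  ∃ h : 0 < n, w ⟨0, h⟩ < w ⟨n - 1, Nat.sub_lt h Nat.one_pos⟩

/-- the first letter is strictly larger than the last letter -/
def FirstGtLast {n k : ℕ} (w : Fin n → Fin k) : Prop :=
  ∃ h : 0 < n, w ⟨n - 1, Nat.sub_lt h Nat.one_pos⟩ < w ⟨0, h⟩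

/-- the first letter equals the last letter -/
def FirstEqLast {n k : ℕ} (w : Fin n → Fin k) : Prop :=
  ∃ h : 0 < n, w ⟨0, h⟩ = w ⟨n - 1, Nat.sub_lt h Nat.one_pos⟩

/-- the first letter differs from the last letter -/
def FirstNeLast {n k : ℕ} (w : Fin n → Fin k) : Prop :=
  ∃ h : 0 < n, w ⟨0, h⟩ ≠ w ⟨n - 1, Nat.sub_lt h Nat.one_pos⟩

/-- `Des_{≥2}(σ) = {i ∈ [n-1] : σ(i) - σ(i+1) ≥ 2}`, recorded via 0-based gap positions:
gap `g ∈ {0,…,n-2}` corresponds to the adjacent pair `(σ g, σ (g+1))`. -/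
def Des2 {n : ℕ} (σ : Equiv.Perm (Fin n)) : Finset ℕ :=
  (Finset.range n).filter fun g =>
    ∃ h : g + 1 < n, (σ ⟨g + 1, h⟩ : ℕ) + 2 ≤ (σ ⟨g, Nat.lt_of_succ_lt h⟩ : ℕ)

/-- `Asc_{≥2}(σ) = {i ∈ [n-1] : σ(i+1) - σ(i) ≥ 2}`, recorded via 0-based gap positions. -/
def Asc2 {n : ℕ} (σ : Equiv.Perm (Fin n)) : Finset ℕ :=
  (Finset.range n).filter fun g =>
    ∃ h : g + 1 < n, (σ ⟨g, Nat.lt_of_succ_lt h⟩ : ℕ) + 2 ≤ (σ ⟨g + 1, h⟩ : ℕ)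

/-- `maj_{≥2}(σ) = Σ i` over the (1-based) positions `i ∈ [n-1]` with `σ(i+1) - σ(i) ≥ 2`;
a 0-based gap `g` corresponds to the 1-based position `g + 1`. -/
def maj2 {n : ℕ} (σ : Equiv.Perm (Fin n)) : ℕ :=
  ∑ g ∈ Asc2 σ, (g + 1)

/-- The Eulerian polynomial `A_m(t) = Σ_{σ ∈ S_m} t^{des σ}`. -/
def Eul (R : Type) [CommRing R] (m : ℕ) : Polynomial R :=
  ∑ σ : Equiv.Perm (Fin m), Polynomial.X ^ desc ⇑σ

/-- `A_n^<(q,t) ∈ ℤ[q][t]`, with `t` the outer variable and `q` the inner one -/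
def AlessB (n : ℕ) : Polynomial (Polynomial ℤ) :=
  ∑ σ ∈ Finset.univ.filter (fun σ : Equiv.Perm (Fin n) => FirstLtLast ⇑σ),
    Polynomial.C (Polynomial.X ^ maj2 σ⁻¹) * Polynomial.X ^ desc ⇑σ

/-- `Ã_n(q,t) ∈ ℤ[q][t]`, with `t` the outer variable and `q` the inner one -/
def AtilB (n : ℕ) : Polynomial (Polynomial ℤ) :=
  ∑ σ : Equiv.Perm (Fin n),
    Polynomial.C (Polynomial.X ^ maj2 σ⁻¹) * Polynomial.X ^ cdesc ⇑σ

namespace QEA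

lemma mk_mod (m : ℕ) (i : Fin (m+1)) (h : ((i:ℕ)+1) % (m+1) < m+1) :
    (⟨((i:ℕ)+1) % (m+1), h⟩ : Fin (m+1)) = i + 1 := by
  apply Fin.ext
  simp only [Fin.add_def, Fin.val_one']
  rw [Nat.add_mod ((i:ℕ)) 1, Nat.mod_eq_of_lt i.isLt]

lemma add_one_eq_mk {m : ℕ} (i : Fin (m+1)) (h : (i:ℕ)+1 < m+1) :
    i + 1 = (⟨(i:ℕ)+1, h⟩ : Fin (m+1)) := by
  rw [← mk_mod m i (Nat.mod_lt _ i.pos)]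
  exact Fin.ext (by simp [Nat.mod_eq_of_lt h])

lemma cdesc_eq {m k : ℕ} (w : Fin (m+1) → Fin k) :
    cdesc w = (Finset.univ.filter fun i : Fin (m+1) => w (i+1) < w i).card := by
  unfold cdesc
  congr 1
  apply Finset.filter_congr
  intro i _
  rw [mk_mod]

lemma cdesc_rot {m k : ℕ} (w : Fin (m+1) → Fin k) (c : Fin (m+1)) :
    cdesc (fun i => w (i + c)) = cdesc w := by
  rw [cdesc_eq, cdesc_eq]
  apply Finset.card_bij' (fun a _ => a + c) (fun a _ => a - c)
  · intro a ha
    simp only [Finset.mem_filter, Finset.mem_univ, true_and] at ha ⊢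
    rwa [add_right_comm] at ha
  · intro a ha
    simp only [Finset.mem_filter, Finset.mem_univ, true_and] at ha ⊢
    rwa [add_right_comm, sub_add_cancel] at *
  · intro a _; simp
  · intro a _; simp

lemma cdesc_eq_desc_add {m k : ℕ} (w : Fin (m+1) → Fin k) :
    cdesc w = desc w + (if w 0 < w (Fin.last m) then 1 else 0) := by
  rw [cdesc_eq]
  unfold desc
  have hsplit : (Finset.univ.filter fun i : Fin (m+1) => w (i+1) < w i)
      = (Finset.univ.filter fun i : Fin (m+1) => ∃ h : (i:ℕ)+1 < m+1, w ⟨(i:ℕ)+1, h⟩ < w i)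
        ∪ (Finset.univ.filter fun i : Fin (m+1) => i = Fin.last m ∧ w 0 < w (Fin.last m)) := by
    ext i
    simp only [Finset.mem_filter, Finset.mem_union, Finset.mem_univ, true_and]
    rcases eq_or_lt_of_le (Nat.lt_succ_iff.mp i.isLt) with hi | hi
    · have hil : i = Fin.last m := Fin.ext (by simp [hi.symm])
      subst hil
      rw [Fin.last_add_one]
      constructor
      · intro h; exact Or.inr ⟨rfl, h⟩
      · rintro (⟨h, _⟩ | ⟨_, h⟩)
        · omega
        · exact h
    · have h1 : (i:ℕ) + 1 < m + 1 := by omega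
      rw [add_one_eq_mk i h1]
      constructor
      · intro h; exact Or.inl ⟨h1, h⟩
      · rintro (⟨_, h⟩ | ⟨hl, _⟩)
        · exact h
        · exact absurd (congrArg Fin.val hl) (by simp; omega)
  rw [hsplit, Finset.card_union_of_disjoint]
  · congr 1
    by_cases hw : w 0 < w (Fin.last m)
    · simp only [hw, and_true, if_pos]
      rw [Finset.filter_eq' Finset.univ (Fin.last m)]
      simp only [Finset.mem_univ, if_pos, Finset.card_singleton]
    · simp [hw]
  · rw [Finset.disjoint_filter]
    rintro i _ ⟨h, _⟩ ⟨hl, _⟩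
    subst hl
    simp at h

end QEA
namespace QEA2
open Equiv QEA

def pext {m : ℕ} (τ : Equiv.Perm (Fin m)) : Equiv.Perm (Fin (m+1)) :=
  Equiv.Perm.decomposeFin.symm (0, τ)

lemma pext_zero {m : ℕ} (τ : Equiv.Perm (Fin m)) : pext τ 0 = 0 :=
  Equiv.Perm.decomposeFin_symm_apply_zero 0 τ

lemma pext_succ {m : ℕ} (τ : Equiv.Perm (Fin m)) (i : Fin m) :
    pext τ i.succ = (τ i).succ := by
  simp [pext, Equiv.Perm.decomposeFin_symm_apply_succ]

lemma pext_mk_succ {m : ℕ} (τ : Equiv.Perm (Fin m)) (j : ℕ) (h : j + 1 < m + 1) :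
    pext τ ⟨j+1, h⟩ = (τ ⟨j, by omega⟩).succ := by
  rw [← Fin.succ_mk, pext_succ]

lemma decomposeFin_fst {m : ℕ} (v : Equiv.Perm (Fin (m+1))) :
    (Equiv.Perm.decomposeFin v).1 = v 0 := by
  have := Equiv.Perm.decomposeFin_symm_apply_zero
    (Equiv.Perm.decomposeFin v).1 (Equiv.Perm.decomposeFin v).2
  rw [Prod.mk.eta, Equiv.symm_apply_apply] at this
  exact this.symm

lemma pext_decompose {m : ℕ} (v : Equiv.Perm (Fin (m+1))) (h : v 0 = 0) :
    pext (Equiv.Perm.decomposeFin v).2 = v := by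
  have h1 : ((0 : Fin (m+1)), (Equiv.Perm.decomposeFin v).2) = Equiv.Perm.decomposeFin v := by
    rw [← h, ← decomposeFin_fst]
  rw [pext, h1, Equiv.symm_apply_apply]

lemma pext_injective {m : ℕ} : Function.Injective (pext (m := m)) := by
  intro a b h
  have h2 := congrArg Equiv.Perm.decomposeFin h
  simpa [pext, Equiv.apply_symm_apply, Prod.mk.injEq] using h2

lemma pext_desc_pos {m : ℕ} (τ : Equiv.Perm (Fin (m+1))) {a : Fin (m+2)}
    (h : ∃ h : (a:ℕ)+1 < m+2, pext τ ⟨(a:ℕ)+1, h⟩ < pext τ a) : 0 < (a:ℕ) := by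
  obtain ⟨h1, h2⟩ := h
  rcases Nat.eq_zero_or_pos (a:ℕ) with hc | hc
  · exfalso
    have ha0 : a = 0 := Fin.ext (by simpa using hc)
    subst ha0
    have he : (⟨((0:Fin (m+2)):ℕ)+1, h1⟩ : Fin (m+2)) = (0 : Fin (m+1)).succ := by
      apply Fin.ext; simp
    rw [he, pext_succ, pext_zero] at h2
    exact Fin.not_lt_zero _ h2
  · exact hc

set_option maxHeartbeats 1000000 in
lemma desc_pext {m : ℕ} (τ : Equiv.Perm (Fin (m+1))) :
    desc ⇑(pext τ) = desc ⇑τ := by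
  unfold desc
  refine Finset.card_bij' (fun (a : Fin (m+2)) _ => (⟨(a:ℕ) - 1, by omega⟩ : Fin (m+1)))
    (fun (b : Fin (m+1)) _ => (⟨(b:ℕ) + 1, by omega⟩ : Fin (m+2))) ?hi ?hj ?hl ?hr
  case hi =>
    intro a ha
    simp only [Finset.mem_filter, Finset.mem_univ, true_and] at ha ⊢
    have hpos : 0 < (a:ℕ) := pext_desc_pos τ ha
    obtain ⟨h1, h2⟩ := ha
    refine ⟨by omega, ?_⟩
    rw [← Fin.succ_lt_succ_iff,
        ← pext_mk_succ τ ((a:ℕ)-1+1) (by omega),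
        ← pext_mk_succ τ ((a:ℕ)-1) (by omega)]
    have e1 : (⟨(a:ℕ)-1+1+1, by omega⟩ : Fin (m+2)) = ⟨(a:ℕ)+1, h1⟩ := Fin.ext (by simp; omega)
    have e2 : (⟨(a:ℕ)-1+1, by omega⟩ : Fin (m+2)) = a := Fin.ext (by simp; omega)
    rw [e1, e2]
    exact h2
  case hj =>
    intro b hb
    simp only [Finset.mem_filter, Finset.mem_univ, true_and] at hb ⊢
    obtain ⟨h1, h2⟩ := hb
    refine ⟨by omega, ?_⟩
    rw [show (⟨(b:ℕ)+1+1, by omega⟩ : Fin (m+2)) = ⟨((b:ℕ)+1)+1, by omega⟩ from rfl,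
      pext_mk_succ, pext_mk_succ, Fin.succ_lt_succ_iff]
    convert h2 using 2
  case hl =>
    intro a ha
    simp only [Finset.mem_filter, Finset.mem_univ, true_and] at ha
    have hpos : 0 < (a:ℕ) := pext_desc_pos τ ha
    apply Fin.ext
    simp only []
    omega
  case hr =>
    intro b _
    apply Fin.ext
    simp only []
    omega

lemma cdesc_pext {m : ℕ} (τ : Equiv.Perm (Fin (m+1))) :
    cdesc ⇑(pext τ) = desc ⇑τ + 1 := by
  rw [cdesc_eq_desc_add, desc_pext, if_pos]
  have : (Fin.last (m+1)) = (Fin.last m).succ := (Fin.succ_last m).symm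
  rw [this, pext_succ, pext_zero]
  exact Fin.succ_pos _

def rotp {m : ℕ} (c : Fin (m+1)) (v : Equiv.Perm (Fin (m+1))) : Equiv.Perm (Fin (m+1)) :=
  (Equiv.addRight c).trans v

lemma rotp_apply {m : ℕ} (c : Fin (m+1)) (v : Equiv.Perm (Fin (m+1))) (i : Fin (m+1)) :
    rotp c v i = v (i + c) := rfl

lemma cdesc_rotp {m : ℕ} (c : Fin (m+1)) (v : Equiv.Perm (Fin (m+1))) :
    cdesc ⇑(rotp c v) = cdesc ⇑v := by
  have h : ⇑(rotp c v) = fun i => v (i + c) := rfl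
  rw [h, cdesc_rot]

lemma rotp_cancel {m : ℕ} (k : Fin (m+1)) (σ : Equiv.Perm (Fin (m+1))) :
    rotp k ((Equiv.addRight k).symm.trans σ) = σ := by
  apply Equiv.ext; intro i
  simp [rotp]

lemma rotp_inj {m : ℕ} (c : Fin (m+1)) {v v' : Equiv.Perm (Fin (m+1))}
    (h : rotp c v = rotp c v') : v = v' := by
  apply Equiv.ext; intro i
  have h2 := congrArg (fun e : Equiv.Perm (Fin (m+1)) => e (i - c)) h
  simpa [rotp_apply, sub_add_cancel] using h2

lemma neg_one_eq_last (m : ℕ) : (-1 : Fin (m+1)) = Fin.last m :=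
  neg_eq_of_add_eq_zero_left (Fin.last_add_one m)

/-- The inverse data for a permutation: rotation amount. -/
lemma surj_data {m : ℕ} (σ : Equiv.Perm (Fin (m+2))) :
    ((Equiv.addRight (-(σ⁻¹ 0))).symm.trans σ) 0 = 0 := by
  simp

lemma sum_cdesc (m : ℕ) :
    (∑ σ : Equiv.Perm (Fin (m+2)), (Polynomial.X : Polynomial ℤ) ^ cdesc ⇑σ)
      = ((m+2 : ℕ) : Polynomial ℤ) * Polynomial.X * Eul ℤ (m+1) := by
  have step : (∑ p : Fin (m+2) × Equiv.Perm (Fin (m+1)),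
        (Polynomial.X : Polynomial ℤ) ^ (desc ⇑p.2 + 1))
      = ∑ σ : Equiv.Perm (Fin (m+2)), (Polynomial.X : Polynomial ℤ) ^ cdesc ⇑σ := by
    apply Finset.sum_bij
      (fun (p : Fin (m+2) × Equiv.Perm (Fin (m+1))) _ => rotp p.1 (pext p.2))
    · intro a _; exact Finset.mem_univ _
    · rintro ⟨c, τ⟩ _ ⟨c', τ'⟩ _ h
      have h0 : rotp c (pext τ) (-c) = 0 := by
        rw [rotp_apply, neg_add_cancel, pext_zero]
      have h0' : pext τ' (-c + c') = 0 := by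
        rw [← rotp_apply, ← h]; exact h0
      have hx : -c + c' = 0 := by
        apply (pext τ').injective
        rw [h0', pext_zero]
      have hcc : c = c' := by
        rwa [neg_add_eq_zero] at hx
      subst hcc
      have hv : pext τ = pext τ' := rotp_inj c h
      rw [pext_injective hv]
    · intro σ _
      refine ⟨(-(σ⁻¹ 0),
        (Equiv.Perm.decomposeFin ((Equiv.addRight (-(σ⁻¹ 0))).symm.trans σ)).2),
        Finset.mem_univ _, ?_⟩
      simp only
      rw [pext_decompose _ (surj_data σ), rotp_cancel]
    · rintro ⟨c, τ⟩ _
      simp only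
      rw [cdesc_rotp, cdesc_pext]
  rw [← step]
  rw [Fintype.sum_prod_type]
  have hinner : ∀ c : Fin (m+2), (∑ τ : Equiv.Perm (Fin (m+1)),
      (Polynomial.X : Polynomial ℤ) ^ (desc ⇑τ + 1)) = Polynomial.X * Eul ℤ (m+1) := by
    intro c
    simp only [Eul]
    rw [Finset.mul_sum]
    apply Finset.sum_congr rfl
    intro τ _
    rw [pow_succ']
  rw [Finset.sum_congr rfl (fun c _ => hinner c), Finset.sum_const, Finset.card_univ,
    Fintype.card_fin, nsmul_eq_mul]
  push_cast
  ring

lemma firstLtLast_iff {m k : ℕ} (w : Fin (m+2) → Fin k) :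
    FirstLtLast w ↔ w 0 < w (Fin.last (m+1)) := by
  unfold FirstLtLast
  constructor
  · rintro ⟨h, hlt⟩
    convert hlt using 2 <;> apply Fin.ext <;> simp
  · intro h
    refine ⟨by omega, ?_⟩
    convert h using 2 <;> apply Fin.ext <;> simp

def Dset {m : ℕ} (τ : Equiv.Perm (Fin (m+1))) : Finset (Fin (m+2)) :=
  Finset.univ.filter (fun j : Fin (m+2) => pext τ (j+1) < pext τ j)

lemma card_Dset {m : ℕ} (τ : Equiv.Perm (Fin (m+1))) :
    (Dset τ).card = desc ⇑τ + 1 := by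
  rw [← cdesc_pext τ, cdesc_eq]
  rfl

lemma sum_desc_lt (m : ℕ) :
    (∑ σ ∈ Finset.univ.filter (fun σ : Equiv.Perm (Fin (m+2)) => FirstLtLast ⇑σ),
        (Polynomial.X : Polynomial ℤ) ^ desc ⇑σ)
      = Polynomial.derivative (Polynomial.X * Eul ℤ (m+1)) := by
  have hfilter : Finset.univ.filter (fun σ : Equiv.Perm (Fin (m+2)) => FirstLtLast ⇑σ)
      = Finset.univ.filter (fun σ : Equiv.Perm (Fin (m+2)) =>
          σ 0 < σ (Fin.last (m+1))) := by
    apply Finset.filter_congr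
    intro σ _
    exact firstLtLast_iff ⇑σ
  have hbij : (∑ x ∈ (Finset.univ : Finset (Equiv.Perm (Fin (m+1)))).sigma
        (fun τ => Dset τ), (Polynomial.X : Polynomial ℤ) ^ desc ⇑x.1)
      = ∑ σ ∈ Finset.univ.filter (fun σ : Equiv.Perm (Fin (m+2)) =>
          σ 0 < σ (Fin.last (m+1))), (Polynomial.X : Polynomial ℤ) ^ desc ⇑σ := by
    apply Finset.sum_bij
      (fun (x : Σ _ : Equiv.Perm (Fin (m+1)), Fin (m+2)) _ => rotp (x.2 + 1) (pext x.1))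
    · rintro ⟨τ, j⟩ hx
      rw [Finset.mem_sigma] at hx
      obtain ⟨-, hj⟩ := hx
      rw [Dset, Finset.mem_filter] at hj
      obtain ⟨-, hj⟩ := hj
      rw [Finset.mem_filter]
      refine ⟨Finset.mem_univ _, ?_⟩
      rw [rotp_apply, rotp_apply, zero_add]
      have hlast : Fin.last (m+1) + (j + 1) = j := by
        rw [add_comm j 1, ← add_assoc, Fin.last_add_one, zero_add]
      rw [hlast]
      exact hj
    · rintro ⟨τ, j⟩ _ ⟨τ', j'⟩ _ h
      have h0 : rotp (j+1) (pext τ) (-(j+1)) = 0 := by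
        rw [rotp_apply, neg_add_cancel, pext_zero]
      have h0' : pext τ' (-(j+1) + (j'+1)) = 0 := by
        rw [← rotp_apply, ← h]; exact h0
      have hx : -(j+1) + (j'+1) = 0 := by
        apply (pext τ').injective
        rw [h0', pext_zero]
      have hjj : (j : Fin (m+2)) = j' := by
        rw [neg_add_eq_zero] at hx
        exact add_right_cancel hx
      subst hjj
      have hv : pext τ = pext τ' := rotp_inj (j+1) h
      rw [pext_injective hv]
    · intro σ hσ
      rw [Finset.mem_filter] at hσ
      obtain ⟨-, hσ⟩ := hσ
      set k : Fin (m+2) := -(σ⁻¹ 0) with hk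
      set v : Equiv.Perm (Fin (m+2)) := (Equiv.addRight k).symm.trans σ with hvdef
      have hv0 : v 0 = 0 := by rw [hvdef]; exact surj_data σ
      set τ : Equiv.Perm (Fin (m+1)) := (Equiv.Perm.decomposeFin v).2 with hτ
      have hpe : pext τ = v := by rw [hτ]; exact pext_decompose v hv0
      have hvap : ∀ x, v x = σ (x + -k) := by
        intro x
        rw [hvdef]
        simp [Equiv.trans_apply, sub_eq_add_neg]
      refine ⟨⟨τ, k - 1⟩, ?_, ?_⟩
      · rw [Finset.mem_sigma]
        refine ⟨Finset.mem_univ _, ?_⟩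
        rw [Dset, Finset.mem_filter]
        refine ⟨Finset.mem_univ _, ?_⟩
        rw [hpe, sub_add_cancel, hvap, hvap, add_neg_cancel]
        have e1 : k - 1 + -k = -1 := by rw [sub_eq_add_neg, add_right_comm, add_neg_cancel, zero_add]
        rw [e1, neg_one_eq_last]
        exact hσ
      · simp only
        rw [sub_add_cancel, hpe, hvdef, rotp_cancel]
    · rintro ⟨τ, j⟩ hx
      rw [Finset.mem_sigma] at hx
      obtain ⟨-, hj⟩ := hx
      rw [Dset, Finset.mem_filter] at hj
      obtain ⟨-, hj⟩ := hj
      simp only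
      have hwrap : (rotp (j + 1) (pext τ)) 0 < (rotp (j + 1) (pext τ)) (Fin.last (m+1)) := by
        rw [rotp_apply, rotp_apply, zero_add]
        have hlast : Fin.last (m+1) + (j + 1) = j := by
          rw [add_comm j 1, ← add_assoc, Fin.last_add_one, zero_add]
        rw [hlast]
        exact hj
      have hc1 : cdesc ⇑(rotp (j + 1) (pext τ)) = desc ⇑τ + 1 := by
        rw [cdesc_rotp, cdesc_pext]
      have hc2 : cdesc ⇑(rotp (j + 1) (pext τ))
          = desc ⇑(rotp (j + 1) (pext τ)) + 1 := by
        rw [cdesc_eq_desc_add, if_pos hwrap]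
      have : desc ⇑(rotp (j + 1) (pext τ)) = desc ⇑τ := by omega
      rw [this]
  have hder : Polynomial.derivative (Polynomial.X * Eul ℤ (m+1))
      = ∑ τ : Equiv.Perm (Fin (m+1)),
          (desc ⇑τ + 1) • (Polynomial.X : Polynomial ℤ) ^ desc ⇑τ := by
    simp only [Eul]
    rw [Finset.mul_sum]
    have hterm : ∀ τ : Equiv.Perm (Fin (m+1)),
        (Polynomial.X : Polynomial ℤ) * Polynomial.X ^ desc ⇑τ
          = Polynomial.X ^ (desc ⇑τ + 1) := fun τ => (pow_succ' _ _).symm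
    rw [Finset.sum_congr rfl (fun τ _ => hterm τ), derivative_sum]
    apply Finset.sum_congr rfl
    intro τ _
    rw [Polynomial.derivative_X_pow, Nat.add_sub_cancel, nsmul_eq_mul]
    norm_cast
  rw [hfilter, ← hbij, Finset.sum_sigma, hder]
  apply Finset.sum_congr rfl
  intro τ _
  have hconst : ∀ s ∈ Dset τ, (Polynomial.X : Polynomial ℤ) ^ desc ⇑((⟨τ, s⟩ : Σ _ : Equiv.Perm (Fin (m+1)), Fin (m+2)).fst) = Polynomial.X ^ desc ⇑τ := fun _ _ => rfl
  rw [Finset.sum_congr rfl hconst, Finset.sum_const, card_Dset]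

end QEA2

/-- `A_n^<(1,t) = (d/dt)(t A_{n-1}(t))` and `Ã_n(1,t) = n t A_{n-1}(t)`;
equivalently, `Σ_{σ(1)<σ(n)} t^{des σ} = (d/dt)(t A_{n-1}(t))` and
`Σ_{σ} t^{cdes σ} = n t A_{n-1}(t)`. -/
theorem qEulerian_at_one (n : ℕ) (hn : 2 ≤ n) :
    (Polynomial.map (Polynomial.evalRingHom (1 : ℤ)) (AlessB n) =
      Polynomial.derivative (Polynomial.X * Eul ℤ (n - 1))) ∧
    (Polynomial.map (Polynomial.evalRingHom (1 : ℤ)) (AtilB n) =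
      (n : Polynomial ℤ) * Polynomial.X * Eul ℤ (n - 1)) ∧
    ((∑ σ ∈ Finset.univ.filter (fun σ : Equiv.Perm (Fin n) => FirstLtLast ⇑σ),
        (Polynomial.X : Polynomial ℤ) ^ desc ⇑σ) =
      Polynomial.derivative (Polynomial.X * Eul ℤ (n - 1))) ∧
    ((∑ σ : Equiv.Perm (Fin n), (Polynomial.X : Polynomial ℤ) ^ cdesc ⇑σ) =
      (n : Polynomial ℤ) * Polynomial.X * Eul ℤ (n - 1)) := by
  obtain ⟨m, rfl⟩ : ∃ m, n = m + 2 := ⟨n - 2, by omega⟩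
  rw [show (m + 2 : ℕ) - 1 = m + 1 from rfl]
  refine ⟨?_, ?_, QEA2.sum_desc_lt m, QEA2.sum_cdesc m⟩
  · unfold AlessB
    rw [← Polynomial.coe_mapRingHom, map_sum, ← QEA2.sum_desc_lt m]
    apply Finset.sum_congr rfl
    intro σ _
    simp [Polynomial.coe_mapRingHom, Polynomial.coe_evalRingHom]
  · unfold AtilB
    rw [← Polynomial.coe_mapRingHom, map_sum, ← QEA2.sum_cdesc m]
    apply Finset.sum_congr rfl
    intro σ _
    simp [Polynomial.coe_mapRingHom, Polynomial.coe_evalRingHom]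

end
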